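/- With X as above (X = {f ∈ ({-1} ∪ κ)^{λ⁺} : supp(f) < λ⁺} with the lexicographic order topology, where cf(κ) ≤ λ < κ), the collection B = {[σ] : σ ∈ W^α for some α < λ⁺}, where [σ] = {f ∈ X : σ ⊆ f}, is a base of open sets for X such that any two members of B are either disjoint or one contains the other; hence X is non-archimedean. -/

import Mathlib

open Set Cardinal TopologicalSpace

/-- A subset `s` of a topological space is discrete (as a subspace) iff every point of `s`
has an open neighbourhood in the ambient space meeting `s` only in that point. -/
def IsDiscreteSubset {X : Type*} [TopologicalSpace X] (s : Set X) : Prop :=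
  ∀ x ∈ s, ∃ U : Set X, IsOpen U ∧ U ∩ s = {x}

/-- `dis X`: the least cardinality of a family of discrete subsets covering `X`. -/
noncomputable def dis (X : Type*) [TopologicalSpace X] : Cardinal :=
  sInf {c : Cardinal | ∃ 𝒟 : Set (Set X), #𝒟 = c ∧ (∀ D ∈ 𝒟, IsDiscreteSubset D) ∧
    ⋃₀ 𝒟 = Set.univ}

/-- `Delta X`: the dispersion character, i.e. the least cardinality of a nonempty open set. -/
noncomputable def Delta (X : Type*) [TopologicalSpace X] : Cardinal :=
  sInf {c : Cardinal | ∃ U : Set X, IsOpen U ∧ U.Nonempty ∧ #U = c}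

open Ordinal

/-- The index set: the canonical well-order of order type `(λ⁺).ord`, i.e. the ordinals
below `λ⁺`. -/
abbrev LexIdx (lam : Cardinal.{0}) : Type := (Order.succ lam).ord.ToType

/-- The underlying set of the example: functions from `λ⁺` into `W = {-1} ∪ κ` (here `⊥`
plays the role of `-1` and the ordinals `< κ.ord` play the role of the elements of `κ`,
with `0` the zero of `κ`) having bounded support, carrying the lexicographic order. -/
def LexFun (κ lam : Cardinal.{0}) : Set (Lex (LexIdx lam → WithBot Ordinal.{0})) :=
  {f | (∀ i, ofLex f i = ⊥ ∨ ∃ o : Ordinal, o < κ.ord ∧ ofLex f i = (o : WithBot Ordinal)) ∧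
       ∃ γ : LexIdx lam, ∀ i, γ ≤ i → ofLex f i = ((0 : Ordinal) : WithBot Ordinal)}

/-- The space `X` of the example. -/
def LexSpace (κ lam : Cardinal.{0}) : Type 1 := ↥(LexFun κ lam)

noncomputable instance (κ lam : Cardinal.{0}) : LinearOrder (LexSpace κ lam) :=
  inferInstanceAs (LinearOrder ↥(LexFun κ lam))

/-- `X` carries the topology induced by the lexicographic order. -/
noncomputable instance (κ lam : Cardinal.{0}) : TopologicalSpace (LexSpace κ lam) :=
  Preorder.topology _

/-- The basic set `[σ]` determined by a string `σ = s ↾ (Iio γ)`: all elements of `X`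
extending `σ`. -/
def lexCyl (κ lam : Cardinal.{0}) (γ : LexIdx lam) (s : LexIdx lam → WithBot Ordinal.{0}) :
    Set (LexSpace κ lam) :=
  {f | ∀ i, i < γ → ofLex f.1 i = s i}

/-- The collection `B = {[σ] : σ ∈ W^α, α < λ⁺}`. -/
def lexBase (κ lam : Cardinal.{0}) : Set (Set (LexSpace κ lam)) :=
  {B | ∃ (γ : LexIdx lam) (s : LexIdx lam → WithBot Ordinal.{0}),
      (∀ i, i < γ → s i = ⊥ ∨ ∃ o : Ordinal, o < κ.ord ∧ s i = (o : WithBot Ordinal)) ∧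
      B = lexCyl κ lam γ s}

section Aux

variable {κ lam : Cardinal.{0}}

/-- The order on `LexSpace` is (definitionally) the lexicographic order. -/
lemma lexSpace_lt_iff {x y : LexSpace κ lam} :
    x < y ↔ ∃ i, (∀ j, j < i → ofLex x.1 j = ofLex y.1 j) ∧ ofLex x.1 i < ofLex y.1 i :=
  Iff.rfl

lemma mem_cyl_self (γ : LexIdx lam) (x : LexSpace κ lam) :
    x ∈ lexCyl κ lam γ (ofLex x.1) := fun _ _ => rfl

lemma cyl_anti {γ δ : LexIdx lam} (h : γ ≤ δ) (s : LexIdx lam → WithBot Ordinal.{0}) :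
    lexCyl κ lam δ s ⊆ lexCyl κ lam γ s := fun _ hf i hi => hf i (lt_of_lt_of_le hi h)

lemma exists_cyl_subset_Ioi [NoMaxOrder (LexIdx lam)] {a x : LexSpace κ lam} (h : a < x) :
    ∃ γ, lexCyl κ lam γ (ofLex x.1) ⊆ Set.Ioi a := by
  obtain ⟨i, hag, hlt⟩ := lexSpace_lt_iff.mp h
  obtain ⟨γ, hγ⟩ := exists_gt i
  refine ⟨γ, fun g hg => ?_⟩
  rw [Set.mem_Ioi, lexSpace_lt_iff]
  exact ⟨i, fun j hj => (hag j hj).trans (hg j (hj.trans hγ)).symm,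
    hlt.trans_eq (hg i hγ).symm⟩

lemma exists_cyl_subset_Iio [NoMaxOrder (LexIdx lam)] {b x : LexSpace κ lam} (h : x < b) :
    ∃ γ, lexCyl κ lam γ (ofLex x.1) ⊆ Set.Iio b := by
  obtain ⟨i, hag, hlt⟩ := lexSpace_lt_iff.mp h
  obtain ⟨γ, hγ⟩ := exists_gt i
  refine ⟨γ, fun g hg => ?_⟩
  rw [Set.mem_Iio, lexSpace_lt_iff]
  exact ⟨i, fun j hj => (hg j (hj.trans hγ)).trans (hag j hj),
    ((hg i hγ)).trans_lt hlt⟩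

lemma cyl_isOpen (hκ : (1 : Ordinal) < κ.ord) [NoMaxOrder (LexIdx lam)]
    (γ : LexIdx lam) (s : LexIdx lam → WithBot Ordinal.{0}) :
    IsOpen (lexCyl κ lam γ s) := by
  letI : OrderTopology (LexSpace κ lam) := ⟨rfl⟩
  rw [isOpen_iff_forall_mem_open]
  intro f hf
  obtain ⟨γ₀, hγ₀⟩ := f.2.2
  set δ : LexIdx lam := max γ γ₀ with hδ
  obtain ⟨δ', hδ'⟩ := exists_gt δ
  have hfδ : ofLex f.1 δ = ((0 : Ordinal) : WithBot Ordinal) := hγ₀ δ (le_max_right _ _)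
  -- the two neighbours of f
  have hmem_m : toLex (Function.update (ofLex f.1) δ ⊥) ∈ LexFun κ lam := by
    constructor
    · intro i
      rcases eq_or_ne i δ with rfl | hne
      · exact Or.inl (by simp)
      · simpa [Function.update_of_ne hne] using f.2.1 i
    · refine ⟨δ', fun i hi => ?_⟩
      have hne : i ≠ δ := fun h => absurd (h ▸ hi) (not_le.mpr hδ')
      simpa [Function.update_of_ne hne] using
        hγ₀ i (le_trans (le_max_right _ _) (le_trans hδ'.le hi))
  have hmem_p : toLex (Function.update (ofLex f.1) δ ((1 : Ordinal) : WithBot Ordinal))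
      ∈ LexFun κ lam := by
    constructor
    · intro i
      rcases eq_or_ne i δ with rfl | hne
      · exact Or.inr ⟨1, hκ, by simp⟩
      · simpa [Function.update_of_ne hne] using f.2.1 i
    · refine ⟨δ', fun i hi => ?_⟩
      have hne : i ≠ δ := fun h => absurd (h ▸ hi) (not_le.mpr hδ')
      simpa [Function.update_of_ne hne] using
        hγ₀ i (le_trans (le_max_right _ _) (le_trans hδ'.le hi))
  set fm : LexSpace κ lam := ⟨toLex (Function.update (ofLex f.1) δ ⊥), hmem_m⟩
  set fp : LexSpace κ lam :=
    ⟨toLex (Function.update (ofLex f.1) δ ((1 : Ordinal) : WithBot Ordinal)), hmem_p⟩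
  have hfm : fm < f := by
    change fm.1 < f.1
    show toLex (Function.update (ofLex f.1) δ ⊥) < toLex (ofLex f.1)
    rw [Pi.toLex_update_lt_self_iff, hfδ]
    exact WithBot.bot_lt_coe _
  have hfp : f < fp := by
    change f.1 < fp.1
    show toLex (ofLex f.1) < toLex (Function.update (ofLex f.1) δ _)
    rw [Pi.lt_toLex_update_self_iff, hfδ]
    exact WithBot.coe_lt_coe.mpr zero_lt_one
  refine ⟨Set.Ioo fm fp, ?_, isOpen_Ioo, hfm, hfp⟩
  rintro g ⟨hg1, hg2⟩
  have hagree : ∀ i, i < δ → ofLex g.1 i = ofLex f.1 i := by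
    by_contra hc
    push_neg at hc
    obtain ⟨i, ⟨hiδ, hine⟩, hmin⟩ := (IsWellFounded.wf (r := ((· < ·) : LexIdx lam →
      LexIdx lam → Prop))).has_min
      {i | i < δ ∧ ofLex g.1 i ≠ ofLex f.1 i} ⟨hc.choose, hc.choose_spec⟩
    have hbelow : ∀ j, j < i → ofLex g.1 j = ofLex f.1 j := by
      intro j hj
      by_contra hne
      exact hmin j ⟨hj.trans hiδ, hne⟩ hj
    rcases lt_or_gt_of_ne hine with hlt | hgt
    · have : g < fm := by
        rw [lexSpace_lt_iff]
        refine ⟨i, fun j hj => ?_, ?_⟩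
        · show ofLex g.1 j = Function.update (ofLex f.1) δ ⊥ j
          rw [Function.update_of_ne (ne_of_lt ((hj.trans hiδ))), hbelow j hj]
        · show ofLex g.1 i < Function.update (ofLex f.1) δ ⊥ i
          rwa [Function.update_of_ne (ne_of_lt hiδ)]
      exact absurd (this.trans hg1) (lt_irrefl _)
    · have : fp < g := by
        rw [lexSpace_lt_iff]
        refine ⟨i, fun j hj => ?_, ?_⟩
        · show Function.update (ofLex f.1) δ _ j = ofLex g.1 j
          rw [Function.update_of_ne (ne_of_lt ((hj.trans hiδ))), hbelow j hj]
        · show Function.update (ofLex f.1) δ _ i < ofLex g.1 i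
          rwa [Function.update_of_ne (ne_of_lt hiδ)]
      exact absurd (hg2.trans this) (lt_irrefl _)
  intro i hi
  rw [hagree i (lt_of_lt_of_le hi (le_max_left _ _))]
  exact hf i hi

end Aux

/-- `lexBase` is a base of open sets for `X` any two members of which are disjoint or
comparable; hence `X` is non-archimedean. -/
theorem statement14 (κ lam : Cardinal.{0}) (h0 : Cardinal.aleph0 ≤ lam)
    (hcf : κ.ord.cof ≤ lam) (hlt : lam < κ) :
    TopologicalSpace.IsTopologicalBasis (lexBase κ lam) ∧
    ∀ A ∈ lexBase κ lam, ∀ B ∈ lexBase κ lam, A ∩ B = ∅ ∨ A ⊆ B ∨ B ⊆ A := by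
  haveI : NoMaxOrder (LexIdx lam) := Cardinal.noMaxOrder (h0.trans (Order.le_succ lam))
  have hκ : (1 : Ordinal) < κ.ord := by
    rw [Cardinal.lt_ord, Ordinal.card_one]
    exact lt_of_lt_of_le Cardinal.one_lt_aleph0 (h0.trans hlt.le)
  constructor
  · apply isTopologicalBasis_of_isOpen_of_nhds
    · rintro u ⟨γ, s, -, rfl⟩
      exact cyl_isOpen hκ γ s
    · intro x u hxu hu
      have key : ∀ v : Set (LexSpace κ lam),
          GenerateOpen {s : Set (LexSpace κ lam) | ∃ a, s = Set.Ioi a ∨ s = Set.Iio a} v →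
          ∀ x ∈ v, ∃ γ, lexCyl κ lam γ (ofLex x.1) ⊆ v := by
        intro v hv
        induction hv with
        | basic t ht =>
          intro x hx
          obtain ⟨a, rfl | rfl⟩ := ht
          · exact exists_cyl_subset_Ioi hx
          · exact exists_cyl_subset_Iio hx
        | univ =>
          intro x _
          obtain ⟨γ, -⟩ := x.2.2
          exact ⟨γ, Set.subset_univ _⟩
        | inter u v _ _ ihu ihv =>
          intro x hx
          obtain ⟨γ₁, h1⟩ := ihu x hx.1
          obtain ⟨γ₂, h2⟩ := ihv x hx.2
          exact ⟨max γ₁ γ₂, Set.subset_inter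
            ((cyl_anti (le_max_left _ _) _).trans h1)
            ((cyl_anti (le_max_right _ _) _).trans h2)⟩
        | sUnion S _ ih =>
          intro x hx
          obtain ⟨t, htS, hxt⟩ := hx
          obtain ⟨γ, h⟩ := ih t htS x hxt
          exact ⟨γ, h.trans (Set.subset_sUnion_of_mem htS)⟩
      obtain ⟨γ, hsub⟩ := key u hu x hxu
      exact ⟨lexCyl κ lam γ (ofLex x.1), ⟨γ, ofLex x.1, fun i _ => x.2.1 i, rfl⟩,
        mem_cyl_self γ x, hsub⟩
  · rintro A ⟨γ, s, -, rfl⟩ B ⟨δ, t, -, rfl⟩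
    by_cases hdis : ∃ i, i < min γ δ ∧ s i ≠ t i
    · left
      obtain ⟨i, hi, hne⟩ := hdis
      ext g
      simp only [Set.mem_inter_iff, Set.mem_empty_iff_false, iff_false, not_and]
      intro hA hB
      exact hne ((hA i (hi.trans_le (min_le_left _ _))).symm.trans
        (hB i (hi.trans_le (min_le_right _ _))))
    · push_neg at hdis
      rcases le_total γ δ with hγδ | hδγ
      · refine Or.inr (Or.inr (fun g hg i hi => ?_))
        rw [hg i (lt_of_lt_of_le hi hγδ)]
        exact (hdis i (lt_min hi (lt_of_lt_of_le hi hγδ))).symm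
      · refine Or.inr (Or.inl (fun g hg i hi => ?_))
        rw [hg i (lt_of_lt_of_le hi hδγ)]
        exact hdis i (lt_min (lt_of_lt_of_le hi hδγ) hi)
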